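/- Let T_n be the modified trimmed mean of a sorted sample x_{1:n} ≤ ... ≤ x_{n:n}: T_n = (Σ w_i x_{i:n})/(Σ w_i) where w_i = 1/n² for the smallest and largest ⌊n/10⌋ order statistics and w_i = 1 otherwise. Then the finite-sample breakdown value of T_n is 1/n: replacing a single observation by s and letting s → ∞ makes T_n unbounded. -/
import Mathlib


open Filter

/-- The modified trimmed mean, giving weight `1/n²` to the extreme `⌊n/10⌋`
order statistics and weight `1` to the rest, breaks down under a single
outlier: replacing one observation by `s → ∞` makes it unbounded.  Hence its
finite-sample breakdown value is `1/n`. -/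
theorem stmt19 (n : ℕ) (hn : 1 ≤ n) (x : Fin n → ℝ) (i0 : Fin n) :
    let w : Fin n → ℝ := fun i =>
      if (i : ℕ) < n / 10 ∨ n - n / 10 ≤ (i : ℕ) then 1 / (n : ℝ) ^ 2 else 1
    let T : (Fin n → ℝ) → ℝ := fun z =>
      (∑ i, w i * z (Tuple.sort z i)) / (∑ i, w i)
    Tendsto (fun s : ℝ => T (Function.update x i0 s)) atTop atTop := by
  intro w T
  have hn1 : (1:ℝ) ≤ n := by exact_mod_cast hn
  have hn0 : (0:ℝ) < n := lt_of_lt_of_le one_pos hn1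
  have hn2 : (0:ℝ) < (n:ℝ)^2 := by positivity
  have hwlb : ∀ i, 1 / (n:ℝ)^2 ≤ w i := by
    intro i
    show 1 / (n:ℝ)^2 ≤
      if (i : ℕ) < n / 10 ∨ n - n / 10 ≤ (i : ℕ) then 1 / (n : ℝ) ^ 2 else (1:ℝ)
    split
    · exact le_refl _
    · rw [div_le_one hn2]; nlinarith
  have hwub : ∀ i, w i ≤ 1 := by
    intro i
    show (if (i : ℕ) < n / 10 ∨ n - n / 10 ≤ (i : ℕ) then 1 / (n : ℝ) ^ 2 else (1:ℝ)) ≤ 1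
    split
    · rw [div_le_one hn2]; nlinarith
    · exact le_refl _
  have hwpos : ∀ i, 0 < w i := fun i => lt_of_lt_of_le (by positivity) (hwlb i)
  haveI : Nonempty (Fin n) := ⟨⟨0, hn⟩⟩
  have hD : 0 < ∑ i, w i := Finset.sum_pos (fun i _ => hwpos i) Finset.univ_nonempty
  set D := ∑ i, w i with hDdef
  set C := ∑ j, |x j| with hCdef
  have key : ∀ s : ℝ, 0 ≤ s →
      (s / (n:ℝ)^2 - C) / D ≤ T (Function.update x i0 s) := by
    intro s hs
    set z := Function.update x i0 s with hz
    have hnum : s / (n:ℝ)^2 - C ≤ ∑ i, w i * z (Tuple.sort z i) := by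
      set σ := Tuple.sort z with hσ
      have hre : ∑ i, w i * z (σ i) = ∑ j, w (σ.symm j) * z j := by
        rw [← Equiv.sum_comp σ (fun j => w (σ.symm j) * z j)]
        simp
      rw [hre]
      have hpt : ∀ j : Fin n, ((if j = i0 then s / (n:ℝ)^2 + |x i0| else 0) - |x j|)
          ≤ w (σ.symm j) * z j := by
        intro j
        by_cases hj : j = i0
        · rw [if_pos hj]
          have hzj : z j = s := by rw [hj]; exact Function.update_self i0 s x
          rw [hzj]
          have h2 : s / (n:ℝ)^2 ≤ w (σ.symm j) * s := by
            calc s / (n:ℝ)^2 = (1 / (n:ℝ)^2) * s := by ring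
            _ ≤ w (σ.symm j) * s := mul_le_mul_of_nonneg_right (hwlb _) hs
          have h3 : |x j| = |x i0| := by rw [hj]
          linarith
        · rw [if_neg hj]
          have hzj : z j = x j := Function.update_of_ne hj s x
          rw [hzj]
          have h1 : |w (σ.symm j) * x j| ≤ |x j| := by
            rw [abs_mul]
            calc |w (σ.symm j)| * |x j| = w (σ.symm j) * |x j| := by
                  rw [abs_of_pos (hwpos _)]
            _ ≤ 1 * |x j| := mul_le_mul_of_nonneg_right (hwub _) (abs_nonneg _)
            _ = |x j| := one_mul _
          have := neg_abs_le (w (σ.symm j) * x j)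
          linarith
      have hsum : ∑ j, ((if j = i0 then s / (n:ℝ)^2 + |x i0| else 0) - |x j|)
          = s / (n:ℝ)^2 + |x i0| - C := by
        rw [Finset.sum_sub_distrib, Finset.sum_ite_eq' Finset.univ i0
          (fun _ => s / (n:ℝ)^2 + |x i0|)]
        simp [hCdef]
      calc s / (n:ℝ)^2 - C
          ≤ ∑ j, ((if j = i0 then s / (n:ℝ)^2 + |x i0| else 0) - |x j|) := by
            rw [hsum]; linarith [abs_nonneg (x i0)]
        _ ≤ ∑ j, w (σ.symm j) * z j := Finset.sum_le_sum (fun j _ => hpt j)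
    exact (div_le_div_iff_of_pos_right hD).mpr hnum
  have hf : Tendsto (fun s : ℝ => (s / (n:ℝ)^2 - C) / D) atTop atTop := by
    apply Tendsto.atTop_div_const hD
    apply tendsto_atTop_add_const_right
    exact Tendsto.atTop_div_const hn2 tendsto_id
  exact tendsto_atTop_mono' atTop
    (eventually_atTop.mpr ⟨0, fun s hs => key s hs⟩) hf
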